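/- Let G be a group acting on a set, a an element with automorphism group Aut(a) acting transitively on a set C of cuts, and Aut(ā) × Aut(A) acting transitively on a set G' of graftings, with stabilisers Aut_c(a) and Aut_b(ā) × Aut_b(A) respectively, and a natural isomorphism Aut_c(a) ≅ Aut_b(ā) × Aut_b(A). Then |C|/|G'| = |Aut(a)|/(|Aut(A)|·|Aut(ā)|), i.e., |C| = (σ(a)/(σ(A)σ(ā)))·|G'|. -/
import Mathlib

lemma card_eq_card_set_mul_card_stab {G α : Type*} [Group G] [MulAction G α]
    [MulAction.IsPretransitive G α] (x : α) :
    Nat.card G = Nat.card α * Nat.card (MulAction.stabilizer G x) := by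
  rw [Subgroup.card_eq_card_quotient_mul_card_subgroup (MulAction.stabilizer G x)]
  congr 1
  rw [← Nat.card_congr (MulAction.orbitEquivQuotientStabilizer G x)]
  exact Nat.card_congr ((Equiv.setCongr (MulAction.orbit_eq_univ G x)).trans (Equiv.Set.univ α))

/-- if `Aut(a)` acts transitively on the set `C` of cuts,
`Aut(ā) × Aut(A)` acts transitively on the set `G'` of graftings, and the
point stabilisers are isomorphic, then
`|C|·|Aut(A)|·|Aut(ā)| = |Aut(a)|·|G'|`, i.e. `|C| = (σ(a)/(σ(A)σ(ā)))·|G'|`. -/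
theorem cuts_graftings_count {G1 GA GB C G' : Type*} [Group G1] [Group GA] [Group GB]
    [Finite G1] [Finite GA] [Finite GB] [Finite C] [Finite G']
    [Nonempty C] [Nonempty G'] [MulAction G1 C] [MulAction (GA × GB) G']
    (h1 : MulAction.IsPretransitive G1 C)
    (h2 : MulAction.IsPretransitive (GA × GB) G')
    (c : C) (b : G')
    (e : MulAction.stabilizer G1 c ≃* MulAction.stabilizer (GA × GB) b) :
    Nat.card C * (Nat.card GA * Nat.card GB) = Nat.card G1 * Nat.card G' := by
  have hA := card_eq_card_set_mul_card_stab (G := G1) c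
  have hB := card_eq_card_set_mul_card_stab (G := GA × GB) b
  have hprod : Nat.card (GA × GB) = Nat.card GA * Nat.card GB := Nat.card_prod GA GB
  have hs : Nat.card (MulAction.stabilizer G1 c)
      = Nat.card (MulAction.stabilizer (GA × GB) b) := Nat.card_congr e.toEquiv
  rw [← hprod, hB, hA, hs]; ring
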